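/- For every integer n ≥ 1, γ_n ≤ 2^(n − n̂), where n̂ = ⌊log₂(n+1)⌋. -/

import Mathlib

/-- A finite subset of the hypercube `Q_n = (ZMod 2)^n` is dominating if every point of the
hypercube is at Hamming distance at most 1 from some element of the subset. -/
def IsDominating {n : ℕ} (Δ : Finset (Fin n → ZMod 2)) : Prop :=
  ∀ y : Fin n → ZMod 2, ∃ x ∈ Δ, hammingDist x y ≤ 1

/-- The minimal domination number `γ_n` of the `n`-dimensional hypercube. -/
noncomputable def gamma (n : ℕ) : ℕ :=
  sInf {k | ∃ Δ : Finset (Fin n → ZMod 2), IsDominating Δ ∧ Δ.card = k}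

/-- The syndrome homomorphism associated to a family of column vectors `v`. -/
def synd {n m : ℕ} (v : Fin n → (Fin m → ZMod 2)) : (Fin n → ZMod 2) →+ (Fin m → ZMod 2) where
  toFun x := ∑ i, x i • v i
  map_zero' := by simp
  map_add' x y := by
    simp only [Pi.add_apply, add_smul]
    rw [Finset.sum_add_distrib]

lemma synd_single {n m : ℕ} (v : Fin n → (Fin m → ZMod 2)) (i : Fin n) :
    synd v (Pi.single i 1) = v i := by
  have h : synd v (Pi.single i 1) = ∑ j, (Pi.single i 1 : Fin n → ZMod 2) j • v j := rfl
  rw [h, Finset.sum_eq_single i]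
  · simp
  · intro j _ hj; simp [Pi.single_apply, hj]
  · simp

lemma addself {m : ℕ} (w : Fin m → ZMod 2) : w + w = 0 := by
  funext j
  have : ∀ a : ZMod 2, a + a = 0 := by decide
  exact this (w j)

lemma aux (n m : ℕ) (v : Fin n → (Fin m → ZMod 2))
    (hv : ∀ w : Fin m → ZMod 2, w ≠ 0 → ∃ i, v i = w) :
    ∃ Δ : Finset (Fin n → ZMod 2), IsDominating Δ ∧ Δ.card * 2 ^ m = 2 ^ n := by
  classical
  set φ := synd v with hφ
  have hφsurj : Function.Surjective φ := by
    intro w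
    by_cases hw : w = 0
    · exact ⟨0, by simp [hw]⟩
    · obtain ⟨i, hi⟩ := hv w hw
      exact ⟨Pi.single i 1, by rw [hφ, synd_single, hi]⟩
  refine ⟨Finset.univ.filter (fun x => φ x = 0), ?_, ?_⟩
  · intro y
    by_cases hy : φ y = 0
    · exact ⟨y, by simp [hy], by simp⟩
    · obtain ⟨i, hi⟩ := hv (φ y) hy
      refine ⟨y + Pi.single i 1, ?_, ?_⟩
      · simp only [Finset.mem_filter, Finset.mem_univ, true_and]
        rw [map_add, hφ, synd_single, ← hφ, hi, addself]
      · have h1 : hammingDist (y + Pi.single i 1) y ≤ ({i} : Finset (Fin n)).card := by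
          apply Finset.card_le_card
          intro j hj
          simp only [hammingDist, Finset.mem_filter, Finset.mem_univ, true_and] at hj
          simp only [Finset.mem_singleton]
          by_contra hji
          apply hj
          simp [Pi.single_apply, hji]
        simpa using h1
  · have h1 : (Finset.univ.filter (fun x => φ x = 0)).card = Nat.card φ.ker := by
      rw [Nat.card_eq_fintype_card, ← Fintype.card_subtype]
      apply Fintype.card_congr
      exact Equiv.subtypeEquivRight (fun x => by simp [AddMonoidHom.mem_ker])
    have h2 : Nat.card ((Fin n → ZMod 2) ⧸ φ.ker) = 2 ^ m := by
      rw [Nat.card_congr (QuotientAddGroup.quotientKerEquivOfSurjective φ hφsurj).toEquiv]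
      simp [Nat.card_eq_fintype_card]
    have h3 := AddSubgroup.card_eq_card_quotient_mul_card_addSubgroup φ.ker
    rw [h2] at h3
    rw [Nat.card_eq_fintype_card] at h3
    simp only [Fintype.card_pi, Fintype.card_fin, ZMod.card, Finset.prod_const,
      Finset.card_univ] at h3
    rw [h1, h3, Nat.mul_comm]

/-- For every `n ≥ 1`, `γ_n ≤ 2^(n - n̂)` where `n̂ = ⌊log₂ (n+1)⌋`. -/
theorem stmt_5 (n : ℕ) (hn : 1 ≤ n) : gamma n ≤ 2 ^ (n - Nat.log 2 (n + 1)) := by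
  classical
  set m := Nat.log 2 (n + 1) with hmdef
  have hm1 : 1 ≤ m := by
    have := (Nat.le_log_iff_pow_le (by norm_num) (show n + 1 ≠ 0 by omega)).mpr
      (show 2 ^ 1 ≤ n + 1 by omega)
    simpa [hmdef] using this
  have hpow : 2 ^ m ≤ n + 1 := Nat.pow_log_le_self 2 (by omega)
  have hmn : m ≤ n := by
    have := Nat.log_lt_self 2 (show n + 1 ≠ 0 by omega)
    omega
  have hcard_ne : Fintype.card {w : Fin m → ZMod 2 // w ≠ 0} = 2 ^ m - 1 := by
    rw [Fintype.card_subtype_compl, Fintype.card_subtype_eq]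
    simp
  obtain ⟨e⟩ : Nonempty ({w : Fin m → ZMod 2 // w ≠ 0} ↪ Fin n) := by
    apply Function.Embedding.nonempty_of_card_le
    rw [hcard_ne, Fintype.card_fin]
    omega
  obtain ⟨v, hv⟩ : ∃ v : Fin n → (Fin m → ZMod 2),
      ∀ w : Fin m → ZMod 2, w ≠ 0 → ∃ i, v i = w := by
    refine ⟨fun i =>
      if h : ∃ w : {w : Fin m → ZMod 2 // w ≠ 0}, e w = i then (Classical.choose h).1
      else Pi.single ⟨0, by omega⟩ 1, ?_⟩
    intro w hw
    refine ⟨e ⟨w, hw⟩, ?_⟩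
    have h : ∃ w' : {w : Fin m → ZMod 2 // w ≠ 0}, e w' = e ⟨w, hw⟩ := ⟨⟨w, hw⟩, rfl⟩
    simp only [dif_pos h]
    have := e.injective (Classical.choose_spec h)
    rw [this]
  obtain ⟨Δ, hdom, hcard⟩ := aux n m v hv
  have hΔcard' : Δ.card = 2 ^ (n - m) := by
    have h : 2 ^ (n - m) * 2 ^ m = 2 ^ n := by
      rw [← pow_add]; congr 1; omega
    have hpos : 0 < 2 ^ m := Nat.pow_pos (by norm_num)
    exact Nat.eq_of_mul_eq_mul_right hpos (by rw [hcard, h])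
  calc gamma n ≤ Δ.card := Nat.sInf_le ⟨Δ, hdom, rfl⟩
    _ = 2 ^ (n - m) := hΔcard'
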